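/- Let F be a field of characteristic different from 2 in which −1 is a square, a ∈ F^× a non-square, E = F(√a), and G = Gal(E/F), a group of order 2. Then the F_2[G]-module E^×/E^{×2} is NOT a free F_2[G]-module. (In the paper's notation: for p = 2 and √−1 ∈ F, H^1(E) is never a free F_2[Gal(E/F)]-module.) -/

import Mathlib

noncomputable section

/-- The subgroup of `p`-th powers in the multiplicative group of units of a field `E`. -/
def pthPowers (E : Type*) [Field E] (p : ℕ) : Subgroup Eˣ :=
  (powMonoidHom p : Eˣ →* Eˣ).range

/-- The group `E^× / E^{×p}`, written additively. -/
abbrev KModP (E : Type*) [Field E] (p : ℕ) : Type _ :=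
  Additive (Eˣ ⧸ pthPowers E p)

instance kModPModule (E : Type*) [Field E] (p : ℕ) : Module (ZMod p) (KModP E p) :=
  AddCommGroup.zmodModule (n := p) (G := KModP E p) (by
    intro x
    induction x using Additive.rec with
    | _ q =>
      induction q using QuotientGroup.induction_on with
      | _ u =>
        rw [← ofMul_pow, ← QuotientGroup.mk_pow, show ((QuotientGroup.mk (u ^ p) :
          Eˣ ⧸ pthPowers E p)) = 1 from (QuotientGroup.eq_one_iff _).2 ⟨u, rfl⟩]
        rfl)

/-- The action of the Galois group on `E^×/E^{×p}` as a representation over `ZMod p`. -/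
def galRep (F E : Type*) [Field F] [Field E] [Algebra F E] (p : ℕ) :
    Representation (ZMod p) (E ≃ₐ[F] E) (KModP E p) where
  toFun σ :=
    AddMonoidHom.toZModLinearMap p <| MonoidHom.toAdditive <|
      QuotientGroup.map (pthPowers E p) (pthPowers E p)
        (Units.map (σ : E →* E))
        (by rintro x ⟨u, rfl⟩
            exact ⟨Units.map (σ : E →* E) u, by simp [powMonoidHom, map_pow]⟩)
  map_one' := by
    ext x
    induction x using Additive.rec with
    | _ q =>
      induction q using QuotientGroup.induction_on with
      | _ u => rfl
  map_mul' := fun σ τ => by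
    ext x
    induction x using Additive.rec with
    | _ q =>
      induction q using QuotientGroup.induction_on with
      | _ u => rfl

/-- Let `F` be a field of characteristic different from 2 in which `-1` is
a square, `a ∈ F^×` a non-square, `E = F(√a)`, and `G = Gal(E/F)`.  Then the
`F_2[G]`-module `E^×/E^{×2}` is NOT a free `F_2[G]`-module. -/
theorem h1_not_free_two_with_sqrt_neg_one
    {F E : Type*} [Field F] [Field E] [Algebra F E]
    (hchar : (2 : F) ≠ 0)
    (i : F) (hi : i ^ 2 = -1)
    (a : F) (ha : a ≠ 0) (hns : ∀ f : F, f ^ 2 ≠ a)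
    (α : E) (hα : α ^ 2 = algebraMap F E a)
    (hgenα : Algebra.adjoin F {α} = ⊤) :
    ¬ Module.Free (MonoidAlgebra (ZMod 2) (E ≃ₐ[F] E)) (galRep F E 2).asModule := by
  intro hfree
  classical
  have hFE : Function.Injective (algebraMap F E) := (algebraMap F E).injective
  have h2E : (2 : E) ≠ 0 := by
    intro h
    exact hchar (hFE (by rw [map_ofNat]; rw [h]; rw [map_zero]))
  have ha' : algebraMap F E a ≠ 0 := fun h => ha (hFE (by simpa using h))
  have hαne : α ≠ 0 := by
    intro h
    apply ha'
    rw [← hα, h]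
    ring
  have hi' : algebraMap F E i ^ 2 = -1 := by
    rw [← map_pow, hi, map_neg, map_one]
  have hine : algebraMap F E i ≠ 0 := by
    intro h
    rw [h] at hi'
    have h1 : (1 : E) = 0 := by linear_combination hi'
    exact one_ne_zero h1
  -- the nontrivial automorphism σ : α ↦ -α
  set P : Polynomial F := Polynomial.X ^ 2 - Polynomial.C a with hP
  have hirr : Irreducible P := X_pow_sub_C_irreducible_of_prime Nat.prime_two hns
  haveI : Fact (Irreducible P) := ⟨hirr⟩
  have hev : ∀ β : E, β ^ 2 = algebraMap F E a → Polynomial.aeval β P = 0 := by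
    intro β hβ
    simp [hP, hβ]
  set φ : AdjoinRoot P →ₐ[F] E := AdjoinRoot.liftAlgHom P (Algebra.ofId F E) α (hev α hα) with hφ
  have hφroot : φ (AdjoinRoot.root P) = α := by
    rw [hφ]; exact AdjoinRoot.lift_root (hev α hα)
  have hφsurj : Function.Surjective φ := by
    intro y
    have hle : Algebra.adjoin F ({α} : Set E) ≤ φ.range := by
      apply Algebra.adjoin_le
      intro x hx
      rcases hx with rfl
      exact ⟨AdjoinRoot.root P, hφroot⟩
    have : y ∈ φ.range := hle (hgenα ▸ Algebra.mem_top)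
    exact this
  have hφinj : Function.Injective φ := φ.toRingHom.injective
  set φe : AdjoinRoot P ≃ₐ[F] E := AlgEquiv.ofBijective φ ⟨hφinj, hφsurj⟩ with hφe
  have hφe_root : φe (AdjoinRoot.root P) = α := hφroot
  set τ : AdjoinRoot P →ₐ[F] E := AdjoinRoot.liftAlgHom P (Algebra.ofId F E) (-α) (hev (-α) (by rw [neg_pow]; simpa using hα)) with hτ
  set σh : E →ₐ[F] E := τ.comp φe.symm.toAlgHom with hσh
  have hσhα : σh α = -α := by
    have h1 : φe.symm α = AdjoinRoot.root P := by
      rw [AlgEquiv.symm_apply_eq, hφe_root]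
    show τ (φe.symm α) = -α
    rw [h1, hτ]
    exact AdjoinRoot.lift_root (hev (-α) (by rw [neg_pow]; simpa using hα))
  have hext : ∀ f g : E →ₐ[F] E, f α = g α → f = g := by
    intro f g h
    apply AlgHom.ext_of_adjoin_eq_top hgenα
    intro x hx
    rcases hx with rfl
    exact h
  have hσσh : σh.comp σh = AlgHom.id F E := by
    apply hext
    simp [AlgHom.comp_apply, hσhα, map_neg]
  set σ : E ≃ₐ[F] E := AlgEquiv.ofAlgHom σh σh hσσh hσσh with hσdef
  have hσα : σ α = -α := hσhα
  have hσσ : ∀ x, σ (σ x) = x := fun x => AlgHom.congr_fun hσσh x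
  have hσmul : σ * σ = 1 := by
    ext x
    exact hσσ x
  have hσinv : σ⁻¹ = σ := inv_eq_of_mul_eq_one_right hσmul
  have hσne1 : σ ≠ 1 := by
    intro h
    have h1 : σ α = α := by rw [h]; rfl
    rw [hσα] at h1
    have : (2 : E) * α = 0 := by linear_combination -h1
    exact hαne ((mul_eq_zero.1 this).resolve_left h2E)
  have hclass : ∀ g : E ≃ₐ[F] E, g = 1 ∨ g = σ := by
    intro g
    have hg2 : g (α ^ 2) = α ^ 2 := by
      rw [hα]; exact AlgEquiv.commutes g a
    rw [map_pow] at hg2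
    have hfac : (g α - α) * (g α + α) = 0 := by linear_combination hg2
    rcases mul_eq_zero.1 hfac with h | h
    · left
      have hfg : (g : E →ₐ[F] E) = ((1 : E ≃ₐ[F] E) : E →ₐ[F] E) := by
        apply hext
        show g α = (1 : E ≃ₐ[F] E) α
        rw [AlgEquiv.one_apply]
        linear_combination h
      ext x
      exact AlgHom.congr_fun hfg x
    · right
      have hfg : (g : E →ₐ[F] E) = (σ : E →ₐ[F] E) := by
        apply hext
        show g α = σ α
        rw [hσα]
        linear_combination h
      ext x
      exact AlgHom.congr_fun hfg x
  -- the group algebra element t = 1 + σ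
  set R := MonoidAlgebra (ZMod 2) (E ≃ₐ[F] E) with hR
  set t : R := MonoidAlgebra.single 1 1 + MonoidAlgebra.single σ 1 with htdef
  have hneg2 : ∀ x : ZMod 2, -x = x := by decide
  have hkerR : ∀ c : R, t * c = 0 → c = c.coeff 1 • t := by
    intro c hc
    have hrel : ∀ g : E ≃ₐ[F] E, c.coeff g + c.coeff (σ * g) = 0 := by
      intro g
      have h0 : (t * c).coeff g = 0 := by rw [hc]; rfl
      rw [htdef, add_mul, show (MonoidAlgebra.single (1 : E ≃ₐ[F] E) (1 : ZMod 2)) = 1 from rfl,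
        one_mul, MonoidAlgebra.coeff_add, Finsupp.add_apply, MonoidAlgebra.single_mul_apply, hσinv, one_mul] at h0
      exact h0
    ext g
    rcases hclass g with rfl | rfl
    · rw [htdef, MonoidAlgebra.coeff_smul, Finsupp.smul_apply, MonoidAlgebra.coeff_add,
        Finsupp.add_apply, MonoidAlgebra.coeff_single, MonoidAlgebra.coeff_single,
        Finsupp.single_apply, Finsupp.single_apply, if_pos rfl, if_neg hσne1]
      simp
    · have h1 := hrel 1
      rw [mul_one] at h1
      have h2 : c.coeff σ = c.coeff 1 := by
        rw [eq_neg_of_add_eq_zero_right h1, hneg2]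
      rw [htdef, MonoidAlgebra.coeff_smul, Finsupp.smul_apply, MonoidAlgebra.coeff_add,
        Finsupp.add_apply, MonoidAlgebra.coeff_single, MonoidAlgebra.coeff_single,
        Finsupp.single_apply, Finsupp.single_apply, if_neg (Ne.symm hσne1), if_pos rfl, h2]
      simp
  have ht2 : t * t = 0 := by
    rw [htdef, add_mul, mul_add, mul_add, MonoidAlgebra.single_mul_single,
      MonoidAlgebra.single_mul_single, MonoidAlgebra.single_mul_single,
      MonoidAlgebra.single_mul_single]
    simp only [one_mul, mul_one, hσmul]
    have hh : ∀ g : E ≃ₐ[F] E,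
        (MonoidAlgebra.single g 1 : R) + MonoidAlgebra.single g 1 = 0 := by
      intro g
      rw [← MonoidAlgebra.single_add, show (1 : ZMod 2) + 1 = 0 from rfl,
        MonoidAlgebra.single_zero]
    calc MonoidAlgebra.single (1 : E ≃ₐ[F] E) (1 : ZMod 2) + MonoidAlgebra.single σ 1 +
          (MonoidAlgebra.single σ 1 + MonoidAlgebra.single 1 1)
        = (MonoidAlgebra.single (1 : E ≃ₐ[F] E) (1 : ZMod 2) + MonoidAlgebra.single 1 1) +
          (MonoidAlgebra.single σ 1 + MonoidAlgebra.single σ 1) := by abel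
      _ = 0 := by rw [hh, hh, add_zero]
  -- free modules: ker t ⊆ im t
  set M := (galRep F E 2).asModule with hM
  have hsplit : ∀ m : M, t • m = 0 → ∃ n : M, m = t • n := by
    intro m hm
    haveI := hfree
    set b := Module.Free.chooseBasis R M with hb
    have hcoord : ∀ j, t * b.repr m j = 0 := by
      intro j
      have h1 : b.repr (t • m) = t • b.repr m := map_smul _ _ _
      have h2 : (t • b.repr m) j = 0 := by
        rw [← h1, hm, map_zero]
        rfl
      simpa [Finsupp.smul_apply, smul_eq_mul] using h2
    refine ⟨b.repr.symm ((b.repr m).mapRange (fun c => c.coeff 1 • (1 : R)) (by simp)), ?_⟩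
    apply b.repr.injective
    rw [map_smul, LinearEquiv.apply_symm_apply]
    ext j : 1
    rw [Finsupp.smul_apply, Finsupp.mapRange_apply, smul_eq_mul, mul_smul_comm, mul_one]
    exact hkerR _ (hcoord j)
  -- elements of M
  set ρ := galRep F E 2 with hρ
  set Mk : Eˣ → M := fun u => ρ.asModuleEquiv.symm (Additive.ofMul (QuotientGroup.mk u)) with hMk
  have hMksurj : ∀ m : M, ∃ u : Eˣ, Mk u = m := by
    intro m
    obtain ⟨u, hu⟩ := QuotientGroup.mk_surjective (Additive.toMul (ρ.asModuleEquiv m))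
    refine ⟨u, ?_⟩
    rw [hMk]
    simp only [hu]
    simp
  have hMkeq : ∀ u v : Eˣ, Mk u = Mk v ↔
      (QuotientGroup.mk u : Eˣ ⧸ pthPowers E 2) = QuotientGroup.mk v := by
    intro u v
    rw [hMk]
    constructor
    · intro h
      have := ρ.asModuleEquiv.symm.injective h
      exact Additive.ofMul.injective this
    · intro h
      simp only [hMk, h]
  have hrho : ∀ (g : E ≃ₐ[F] E) (u : Eˣ),
      ρ g (Additive.ofMul (QuotientGroup.mk u) : KModP E 2) =
        Additive.ofMul (QuotientGroup.mk (Units.map (g : E →* E) u)) := by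
    intro g u
    rfl
  have hsingle : ∀ (g : E ≃ₐ[F] E) (u : Eˣ),
      (MonoidAlgebra.single g (1 : ZMod 2) : R) • Mk u = Mk (Units.map (g : E →* E) u) := by
    intro g u
    have h1 := ρ.asModuleEquiv_symm_map_rho g (Additive.ofMul (QuotientGroup.mk u))
    rw [hrho, MonoidAlgebra.of_apply] at h1
    exact h1.symm
  have hMkmul : ∀ u v : Eˣ, Mk (u * v) = Mk u + Mk v := by
    intro u v
    rw [hMk]
    simp only [QuotientGroup.mk_mul, ofMul_mul, map_add]
  have htMk : ∀ u : Eˣ, t • Mk u = Mk (u * Units.map (σ : E →* E) u) := by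
    intro u
    rw [htdef, add_smul,
      show (MonoidAlgebra.single (1 : E ≃ₐ[F] E) (1 : ZMod 2) : R) = 1 from rfl, one_smul,
      hsingle, hMkmul]
  -- the class of α
  set uα : Eˣ := Units.mk0 α hαne with huα
  have hσuα : ((Units.map (σ : E →* E) uα : Eˣ) : E) = -α := by
    rw [Units.coe_map]
    exact hσα
  have htα : t • Mk uα = 0 := by
    rw [htMk]
    have hmem : uα * Units.map (σ : E →* E) uα ∈ pthPowers E 2 := by
      refine ⟨Units.mk0 (algebraMap F E i * α) (mul_ne_zero hine hαne), ?_⟩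
      apply Units.ext
      rw [powMonoidHom_apply, Units.val_pow_eq_pow_val, Units.val_mul, hσuα, Units.val_mk0]
      show (algebraMap F E i * α) ^ 2 = α * -α
      rw [mul_pow, hi']
      ring
    show ρ.asModuleEquiv.symm
      (Additive.ofMul (QuotientGroup.mk (uα * Units.map (σ : E →* E) uα))) = 0
    rw [(QuotientGroup.eq_one_iff _).2 hmem]
    simp
  -- conclude
  obtain ⟨n, hn⟩ := hsplit (Mk uα) htα
  obtain ⟨u, rfl⟩ := hMksurj n
  rw [htMk] at hn
  have hq := (hMkeq _ _).1 hn
  rw [QuotientGroup.eq] at hq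
  obtain ⟨e, he⟩ := hq
  -- he : powMonoidHom 2 e = uα⁻¹ * (u * Units.map σ u)
  have heval : ((e : Eˣ) : E) ^ 2 = α⁻¹ * ((u : E) * σ (u : E)) := by
    have h1 := congrArg (Units.val) he
    rw [powMonoidHom_apply, Units.val_pow_eq_pow_val] at h1
    rw [h1]
    simp [Units.coe_map, huα]
  have hkey : α * ((e : Eˣ) : E) ^ 2 = (u : E) * σ (u : E) := by
    rw [heval]
    field_simp
  set f : E := ((e : Eˣ) : E) with hf
  have hfne : f ≠ 0 := Units.ne_zero e
  have hfix : σ ((u : E) * σ (u : E)) = (u : E) * σ (u : E) := by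
    rw [map_mul, hσσ]
    ring
  have hstep : -α * σ f ^ 2 = α * f ^ 2 := by
    have h3 := congrArg σ hkey
    rw [map_mul, map_pow, hσα, hfix, ← hkey] at h3
    exact h3
  have hsq : σ f ^ 2 = -f ^ 2 := by
    apply mul_left_cancel₀ (neg_ne_zero.2 hαne)
    rw [hstep]
    ring
  have hfac2 : (σ f - algebraMap F E i * f) * (σ f + algebraMap F E i * f) = 0 := by
    linear_combination hsq - f ^ 2 * hi'
  have hff : f = -f := by
    rcases mul_eq_zero.1 hfac2 with h | h
    · have hsf : σ f = algebraMap F E i * f := by linear_combination h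
      have h2 := hσσ f
      rw [hsf, map_mul, AlgEquiv.commutes, hsf] at h2
      linear_combination f * hi' - h2
    · have hsf : σ f = -(algebraMap F E i * f) := by linear_combination h
      have h2 := hσσ f
      rw [hsf, map_neg, map_mul, AlgEquiv.commutes, hsf] at h2
      linear_combination f * hi' - h2
  have h2f : (2 : E) * f = 0 := by linear_combination hff
  exact hfne ((mul_eq_zero.1 h2f).resolve_left h2E)
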